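/- arXiv:1906.03567 — 3 statements merged into one kernel-verified Lean document; each statement's English description precedes it below -/
import Mathlib

section
/- Suppose a family of n tasks has relative demands Dᵢ' (uplink), Oᵢ' (downlink), Cᵢ' (compute), all positive, and a fog node has resource capacities Rᵘ, Rᵈ, Rᶠ > 0. Define β_u = (∑ᵢ Dᵢ')/Rᵘ, β_d = (∑ᵢ Oᵢ')/Rᵈ, β_f = (∑ᵢ Cᵢ')/Rᶠ. If β_u + β_d + β_f ≤ 1, then there exists a resource allocation (rᵢᵘ, rᵢᵈ, rᵢᶠ) with rᵢᵘ, rᵢᵈ, rᵢᶠ > 0, ∑ᵢ rᵢᵘ ≤ Rᵘ, ∑ᵢ rᵢᵈ ≤ Rᵈ, ∑ᵢ rᵢᶠ ≤ Rᶠ, and Dᵢ'/rᵢᵘ + Oᵢ'/rᵢᵈ + Cᵢ'/rᵢᶠ ≤ 1 for every task i. -/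
theorem proportional_allocation_feasible (n : ℕ) (hn : 1 ≤ n)
    (D O C : Fin n → ℝ) (Ru Rd Rf : ℝ)
    (hD : ∀ i, 0 < D i) (hO : ∀ i, 0 < O i) (hC : ∀ i, 0 < C i)
    (hRu : 0 < Ru) (hRd : 0 < Rd) (hRf : 0 < Rf)
    (hsum : (∑ i, D i) / Ru + (∑ i, O i) / Rd + (∑ i, C i) / Rf ≤ 1) :
    ∃ ru rd rf : Fin n → ℝ,
      (∀ i, 0 < ru i) ∧ (∀ i, 0 < rd i) ∧ (∀ i, 0 < rf i) ∧
      (∑ i, ru i) ≤ Ru ∧ (∑ i, rd i) ≤ Rd ∧ (∑ i, rf i) ≤ Rf ∧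
      ∀ i, D i / ru i + O i / rd i + C i / rf i ≤ 1 := by
  have hne : (Finset.univ : Finset (Fin n)).Nonempty := by
    exact Finset.univ_nonempty_iff.mpr (Fin.pos_iff_nonempty.mp hn)
  have hSu : 0 < ∑ i, D i := Finset.sum_pos (fun i _ => hD i) hne
  have hSd : 0 < ∑ i, O i := Finset.sum_pos (fun i _ => hO i) hne
  have hSf : 0 < ∑ i, C i := Finset.sum_pos (fun i _ => hC i) hne
  refine ⟨fun i => D i * Ru / (∑ j, D j), fun i => O i * Rd / (∑ j, O j),
    fun i => C i * Rf / (∑ j, C j), fun i => div_pos (mul_pos (hD i) hRu) hSu,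
    fun i => div_pos (mul_pos (hO i) hRd) hSd,
    fun i => div_pos (mul_pos (hC i) hRf) hSf, ?_, ?_, ?_, ?_⟩
  · rw [← Finset.sum_div, ← Finset.sum_mul, mul_comm, mul_div_assoc, div_self hSu.ne', mul_one]
  · rw [← Finset.sum_div, ← Finset.sum_mul, mul_comm, mul_div_assoc, div_self hSd.ne', mul_one]
  · rw [← Finset.sum_div, ← Finset.sum_mul, mul_comm, mul_div_assoc, div_self hSf.ne', mul_one]
  · intro i
    have hd := (hD i).ne'
    have ho := (hO i).ne'
    have hc := (hC i).ne'
    have h1 : D i / (D i * Ru / (∑ j, D j)) = (∑ j, D j) / Ru := by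
      field_simp
    have h2 : O i / (O i * Rd / (∑ j, O j)) = (∑ j, O j) / Rd := by
      field_simp
    have h3 : C i / (C i * Rf / (∑ j, C j)) = (∑ j, C j) / Rf := by
      field_simp
    rw [h1, h2, h3]; exact hsum
end

section
/- Suppose every cut added to the master problem is valid (satisfied by every x extendable to a feasible solution of the original problem), and the master problem at each iteration minimizes the same objective eᵀx as the original problem over x ∈ X₀ subject to the current cuts. If at some iteration the master problem's optimal solution x* admits a feasible resource allocation r* for the subproblem constraints, then (x*, r*) is a global optimal solution of the original joint problem. -/
theorem master_feasible_solution_is_optimal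
    {α ρ : Type*} (X₀ : Set α) (R : α → ρ → Prop) (e : α → ℝ)
    (cuts : Set (α → Prop))
    (hvalid : ∀ P ∈ cuts, ∀ x, x ∈ X₀ → (∃ r, R x r) → P x)
    (xstar : α) (hx : xstar ∈ X₀) (hcuts : ∀ P ∈ cuts, P xstar)
    (hopt : ∀ x, x ∈ X₀ → (∀ P ∈ cuts, P x) → e xstar ≤ e x)
    (rstar : ρ) (hr : R xstar rstar) :
    (xstar ∈ X₀ ∧ R xstar rstar) ∧
    ∀ x r, x ∈ X₀ → R x r → e xstar ≤ e x := by
  exact ⟨⟨hx, hr⟩, fun x r hxX hxr =>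
    hopt x hxX (fun P hP => hvalid P hP x hxX ⟨r, hxr⟩)⟩
end

section
/- Let β_f = (∑_{i∈T} Cᵢ')/Rᶠ where T is the set of tasks processed at the fog node, and suppose β_f < 1. Define γ_u = (∑_{i∈T} Dᵢ'/(1-β_f) + ∑_{i∈S} Dᵢ')/Rᵘ and γ_d = (∑_{i∈T} Oᵢ'/(1-β_f) + ∑_{i∈S} Oᵢ')/Rᵈ, where S is the set of tasks forwarded to the cloud (with Cᵢ' = 0 for i ∈ S). If γ_u + γ_d ≤ 1, then there exists an allocation with rᵢᶠ > 0 for i ∈ T, rᵢᵘ, rᵢᵈ > 0 for all i ∈ T ∪ S, capacity constraints ∑_{i∈T} rᵢᶠ ≤ Rᶠ, ∑ rᵢᵘ ≤ Rᵘ, ∑ rᵢᵈ ≤ Rᵈ, and satisfaction rate Dᵢ'/rᵢᵘ + Oᵢ'/rᵢᵈ + Cᵢ'/rᵢᶠ ≤ 1 for every i ∈ T (and Dᵢ'/rᵢᵘ + Oᵢ'/rᵢᵈ ≤ 1 for i ∈ S). -/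
theorem two_stage_allocation_feasible {ι : Type*} [DecidableEq ι] (T S : Finset ι)
    (hTS : Disjoint T S) (hT : T.Nonempty) (hS : S.Nonempty)
    (D O C : ι → ℝ) (Ru Rd Rf : ℝ)
    (hD : ∀ i ∈ T ∪ S, 0 < D i) (hO : ∀ i ∈ T ∪ S, 0 < O i)
    (hC : ∀ i ∈ T, 0 < C i)
    (hRu : 0 < Ru) (hRd : 0 < Rd) (hRf : 0 < Rf)
    (βf : ℝ) (hβf : βf = (∑ i ∈ T, C i) / Rf) (hβflt : βf < 1)
    (hγ : ((∑ i ∈ T, D i / (1 - βf)) + ∑ i ∈ S, D i) / Ru +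
          ((∑ i ∈ T, O i / (1 - βf)) + ∑ i ∈ S, O i) / Rd ≤ 1) :
    ∃ ru rd rf : ι → ℝ,
      (∀ i ∈ T ∪ S, 0 < ru i) ∧ (∀ i ∈ T ∪ S, 0 < rd i) ∧
      (∀ i ∈ T, 0 < rf i) ∧
      (∑ i ∈ T, rf i) ≤ Rf ∧
      (∑ i ∈ T ∪ S, ru i) ≤ Ru ∧ (∑ i ∈ T ∪ S, rd i) ≤ Rd ∧
      (∀ i ∈ T, D i / ru i + O i / rd i + C i / rf i ≤ 1) ∧
      (∀ i ∈ S, D i / ru i + O i / rd i ≤ 1) := by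
  have hβf0 : 0 < βf := by
    rw [hβf]
    exact div_pos (Finset.sum_pos hC hT) hRf
  have h1β : 0 < 1 - βf := by linarith
  -- scaled demands
  set d : ι → ℝ := fun i => if i ∈ T then D i / (1 - βf) else D i with hd
  set o : ι → ℝ := fun i => if i ∈ T then O i / (1 - βf) else O i with ho
  have hdpos : ∀ i ∈ T ∪ S, 0 < d i := by
    intro i hi
    simp only [hd]
    split <;> [exact div_pos (hD i hi) h1β; exact hD i hi]
  have hopos : ∀ i ∈ T ∪ S, 0 < o i := by
    intro i hi
    simp only [ho]
    split <;> [exact div_pos (hO i hi) h1β; exact hO i hi]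
  set A : ℝ := (∑ i ∈ T, D i / (1 - βf)) + ∑ i ∈ S, D i with hA
  set B : ℝ := (∑ i ∈ T, O i / (1 - βf)) + ∑ i ∈ S, O i with hB
  have hApos : 0 < A :=
    add_pos (Finset.sum_pos (fun i hi => div_pos (hD i (Finset.mem_union_left _ hi)) h1β) hT)
      (Finset.sum_pos (fun i hi => hD i (Finset.mem_union_right _ hi)) hS)
  have hBpos : 0 < B :=
    add_pos (Finset.sum_pos (fun i hi => div_pos (hO i (Finset.mem_union_left _ hi)) h1β) hT)
      (Finset.sum_pos (fun i hi => hO i (Finset.mem_union_right _ hi)) hS)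
  set γu : ℝ := A / Ru with hγu
  set γd : ℝ := B / Rd with hγd
  have hγupos : 0 < γu := div_pos hApos hRu
  have hγdpos : 0 < γd := div_pos hBpos hRd
  have hγsum : γu + γd ≤ 1 := hγ
  have hsumd : ∑ i ∈ T ∪ S, d i = A := by
    rw [Finset.sum_union hTS, hA]
    congr 1
    · exact Finset.sum_congr rfl (fun i hi => by simp [hd, hi])
    · refine Finset.sum_congr rfl (fun i hi => ?_)
      have : i ∉ T := fun h => (hTS.forall_ne_finset h hi) rfl
      simp [hd, this]
  have hsumo : ∑ i ∈ T ∪ S, o i = B := by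
    rw [Finset.sum_union hTS, hB]
    congr 1
    · exact Finset.sum_congr rfl (fun i hi => by simp [ho, hi])
    · refine Finset.sum_congr rfl (fun i hi => ?_)
      have : i ∉ T := fun h => (hTS.forall_ne_finset h hi) rfl
      simp [ho, this]
  refine ⟨fun i => d i / γu, fun i => o i / γd, fun i => C i / βf, ?_, ?_, ?_, ?_, ?_, ?_, ?_, ?_⟩
  · exact fun i hi => div_pos (hdpos i hi) hγupos
  · exact fun i hi => div_pos (hopos i hi) hγdpos
  · exact fun i hi => div_pos (hC i hi) hβf0
  · have hCsum : (∑ i ∈ T, C i) = βf * Rf := by rw [hβf]; field_simp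
    rw [← Finset.sum_div, hCsum, mul_div_assoc]
    exact le_of_eq (by field_simp)

  · rw [← Finset.sum_div, hsumd, hγu, div_div_eq_mul_div]
    exact le_of_eq (by field_simp)
  · rw [← Finset.sum_div, hsumo, hγd, div_div_eq_mul_div]
    exact le_of_eq (by field_simp)
  · intro i hi
    have hDi := hD i (Finset.mem_union_left _ hi)
    have hOi := hO i (Finset.mem_union_left _ hi)
    have hCi := hC i hi
    have h1 : D i / (d i / γu) = γu * (1 - βf) := by
      simp only [hd, if_pos hi]
      field_simp
    have h2 : O i / (o i / γd) = γd * (1 - βf) := by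
      simp only [ho, if_pos hi]
      field_simp
    have h3 : C i / (C i / βf) = βf := by
      field_simp
    rw [h1, h2, h3]
    nlinarith
  · intro i hi
    have hiT : i ∉ T := fun h => (hTS.forall_ne_finset h hi) rfl
    have hDi := hD i (Finset.mem_union_right _ hi)
    have hOi := hO i (Finset.mem_union_right _ hi)
    have h1 : D i / (d i / γu) = γu := by
      simp only [hd, if_neg hiT]
      field_simp
    have h2 : O i / (o i / γd) = γd := by
      simp only [ho, if_neg hiT]
      field_simp
    rw [h1, h2]
    exact hγsum
end
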